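/- Let f : X → 𝒢(Z,C) be a convex function and x₀ ∈ dom f. If x₀ solves the set-valued Stampacchia inequality (SVI_M): f(x₀) = Z, or for all x ∈ dom f with f(x) ≠ f(x₀) one has 0 ∉ f′(x₀, x−x₀); or if x₀ satisfies: for all x ∈ dom f with f(x) ≠ f(x₀) there exists z* ∈ C⁻∖{0} such that either (φ_{f,z*}(x₀) = −∞ and φ_{f,z*}(x₀) < φ_{f,z*}(x)) or 0 < φ′_{f,z*}(x₀, x−x₀); then f(x₀) is minimal in f[X], i.e. for all x ∈ X, f(x) ⊇ f(x₀) implies f(x) = f(x₀). -/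

import Mathlib

open Set Pointwise

noncomputable section

variable {Z : Type*} [AddCommGroup Z] [Module ℝ Z] [TopologicalSpace Z]

/-- The inf-residual `A ⊖ B = {z : B + {z} ⊆ A}`. -/
def resid (A B : Set Z) : Set Z := {z : Z | B + {z} ⊆ A}

/-- The recession cone `0⁺A`, with the convention `0⁺∅ = ∅`. -/
def recCone (A : Set Z) : Set Z := {z : Z | A.Nonempty ∧ A + {z} ⊆ A}

/-- `A ⊕ B = cl (A + B)`. -/
def oplus (A B : Set Z) : Set Z := closure (A + B)

/-- Membership in `𝒢(Z,C)`: `A = cl co (A + C)`. -/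
def IsG (C A : Set Z) : Prop := A = closure (convexHull ℝ (A + C))

/-- The set `C⁻ \ {0}` of nonzero elements of the negative dual cone. -/
def negDualNZ (C : Set Z) : Set (Z →L[ℝ] ℝ) :=
  {p : Z →L[ℝ] ℝ | (∀ c ∈ C, p c ≤ 0) ∧ p ≠ 0}

/-- `inf {-z*(z) : z ∈ A}` as an extended real. -/
def scal (p : Z →L[ℝ] ℝ) (A : Set Z) : EReal :=
  sInf ((fun z => ((-(p z) : ℝ) : EReal)) '' A)

/-- Support function `σ(z*|A) = sup {z*(z) : z ∈ A}` as an extended real. -/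
def suppF (p : Z →L[ℝ] ℝ) (A : Set Z) : EReal :=
  sSup ((fun z => ((p z : ℝ) : EReal)) '' A)

/-- Inf-residuation on the extended reals: `r ⊖ s = inf {t ∈ ℝ : r ≤ s + t}`. -/
def eresid (r s : EReal) : EReal :=
  sInf ((fun t : ℝ => (t : EReal)) '' {t : ℝ | r ≤ s + (t : EReal)})

variable {X : Type*} [AddCommGroup X] [Module ℝ X]

/-- The scalarization `φ_{f,z*}(x) = inf {-z*(z) : z ∈ f(x)}`. -/
def phi (f : X → Set Z) (p : Z →L[ℝ] ℝ) (x : X) : EReal := scal p (f x)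

/-- Convexity for set-valued functions:
`f(t x₁ + (1-t) x₂) ⊇ cl (t f(x₁) + (1-t) f(x₂))`. -/
def ConvexSV (f : X → Set Z) : Prop :=
  ∀ x₁ x₂ : X, ∀ t : ℝ, t ∈ Ioo (0:ℝ) 1 →
    closure (t • f x₁ + (1 - t) • f x₂) ⊆ f (t • x₁ + (1 - t) • x₂)

/-- The set-valued directional derivative
`f′(x,u) = ⋂_{t₀>0} cl co ⋃_{0<t<t₀} (1/t)•(f(x+tu) ⊖ f(x))`. -/
def sder (f : X → Set Z) (x u : X) : Set Z :=
  ⋂ t₀ ∈ Ioi (0:ℝ), closure (convexHull ℝ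
    (⋃ t ∈ Ioo (0:ℝ) t₀, (1 / t) • resid (f (x + t • u)) (f x)))

/-- The scalar Dini derivative `φ′_{f,z*}(x,u) = inf_{t>0} (1/t)(φ(x+tu) ⊖ φ(x))`. -/
def phiDer (f : X → Set Z) (p : Z →L[ℝ] ℝ) (x u : X) : EReal :=
  ⨅ t ∈ Ioi (0:ℝ), (((1 / t : ℝ)) : EReal) * eresid (phi f p (x + t • u)) (phi f p x)

end


theorem stmt_15
  {Z : Type*} [AddCommGroup Z] [Module ℝ Z] [TopologicalSpace Z]
  [IsTopologicalAddGroup Z] [ContinuousSMul ℝ Z] [LocallyConvexSpace ℝ Z] [T2Space Z]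
  {X : Type*} [AddCommGroup X] [Module ℝ X]
  (C : Set Z) (hCclosed : IsClosed C) (hCconv : Convex ℝ C)
  (hCcone : ∀ c ∈ C, ∀ r : ℝ, 0 < r → r • c ∈ C) (hC0 : (0:Z) ∈ C)
  (hdual : (negDualNZ C).Nonempty)
  (f : X → Set Z) (hG : ∀ x, IsG C (f x)) (hf : ConvexSV f)
  (x₀ : X) (hx₀ : (f x₀).Nonempty)
  (h : (f x₀ = univ ∨ ∀ x : X, (f x).Nonempty → f x ≠ f x₀ →
      (0:Z) ∉ sder f x₀ (x - x₀))
    ∨ (∀ x : X, (f x).Nonempty → f x ≠ f x₀ → ∃ p ∈ negDualNZ C,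
        (phi f p x₀ = ⊥ ∧ phi f p x₀ < phi f p x) ∨ (0:EReal) < phiDer f p x₀ (x - x₀))) :
    ∀ x : X, f x₀ ⊆ f x → f x = f x₀ := by
  intro x hsub
  by_contra hne
  have hfxne : (f x).Nonempty := hx₀.mono hsub
  have hphi_le : ∀ p : Z →L[ℝ] ℝ, phi f p x ≤ phi f p x₀ := fun p =>
    sInf_le_sInf (Set.image_mono hsub)
  rcases h with (hA | hB) | hC
  · exact hne (by rw [hA] at hsub ⊢; exact Set.univ_subset_iff.mp hsub)
  · refine hB x hfxne hne ?_
    simp only [sder, Set.mem_iInter]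
    intro t₀ ht₀
    rw [Set.mem_Ioi] at ht₀
    set t : ℝ := min t₀ 1 / 2 with htdef
    have ht0 : 0 < t := by positivity
    have hml : min t₀ 1 ≤ t₀ := min_le_left t₀ 1
    have hmr : min t₀ 1 ≤ 1 := min_le_right t₀ 1
    have htlt₀ : t < t₀ := by rw [htdef]; linarith
    have ht1 : t < 1 := by rw [htdef]; linarith
    apply subset_closure
    apply subset_convexHull
    refine Set.mem_iUnion₂.mpr ⟨t, ⟨ht0, htlt₀⟩, ?_⟩
    have hkey : f x₀ ⊆ f (x₀ + t • (x - x₀)) := by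
      have heq : x₀ + t • (x - x₀) = t • x + (1 - t) • x₀ := by module
      rw [heq]
      intro a ha
      apply hf x x₀ t ⟨ht0, ht1⟩
      apply subset_closure
      have ha' : a = t • a + (1 - t) • a := by module
      rw [ha']
      exact Set.add_mem_add (smul_mem_smul_set (hsub ha)) (smul_mem_smul_set ha)
    have h0res : (0:Z) ∈ resid (f (x₀ + t • (x - x₀))) (f x₀) := by
      intro z hz
      obtain ⟨a, ha, b, hb, rfl⟩ := hz
      rw [Set.mem_singleton_iff] at hb
      subst hb
      simpa using hkey ha
    exact ⟨0, h0res, smul_zero _⟩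
  · obtain ⟨p, _, hcase⟩ := hC x hfxne hne
    rcases hcase with ⟨hbot, hlt⟩ | hpos
    · exact absurd (hphi_le p) (not_le.mpr hlt)
    · have hres : eresid (phi f p x) (phi f p x₀) ≤ 0 := by
        have h0mem : ((0:ℝ) : EReal) ∈
            (fun t : ℝ => (t : EReal)) '' {t : ℝ | phi f p x ≤ phi f p x₀ + (t : EReal)} := by
          refine ⟨0, ?_, rfl⟩
          simpa using hphi_le p
        simpa [eresid] using sInf_le h0mem
      have h1 : phiDer f p x₀ (x - x₀) ≤
          (((1 / (1:ℝ)) : ℝ) : EReal) * eresid (phi f p (x₀ + (1:ℝ) • (x - x₀))) (phi f p x₀) :=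
        iInf₂_le (1:ℝ) (Set.mem_Ioi.mpr one_pos)
      have hx1 : x₀ + (1:ℝ) • (x - x₀) = x := by module
      rw [hx1] at h1
      simp only [one_div_one, EReal.coe_one, one_mul] at h1
      exact absurd (h1.trans hres) (not_le.mpr hpos)
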